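/- Let X and Y be sober topological spaces and f : X → Y a continuous map. In the category of sober topological spaces and continuous maps (the full subcategory of the category of topological spaces on T0 quasi-sober spaces), f is an epimorphism if and only if for every closed subset z of Y, the set (range f) ∩ z is dense in z (i.e., z ⊆ closure((range f) ∩ z)). -/

import Mathlib

open CategoryTheory

/-- The product of two quasi-sober spaces is quasi-sober. -/
instance quasiSober_prod {A B : Type*} [TopologicalSpace A] [TopologicalSpace B]
    [QuasiSober A] [QuasiSober B] : QuasiSober (A × B) where
  sober {S} hS hS' := by
    obtain ⟨x, hx⟩ := QuasiSober.sober
      (hS.image Prod.fst continuous_fst.continuousOn).closure isClosed_closure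
    obtain ⟨y, hy⟩ := QuasiSober.sober
      (hS.image Prod.snd continuous_snd.continuousOn).closure isClosed_closure
    have hxy : (x, y) ∈ S := by
      by_contra hmem
      have hnh : Sᶜ ∈ nhds (x, y) := hS'.isOpen_compl.mem_nhds hmem
      rw [mem_nhds_prod_iff'] at hnh
      obtain ⟨U, V, hU, hxU, hV, hyV, hUV⟩ := hnh
      have h1 : (S ∩ (U ×ˢ (Set.univ : Set B))).Nonempty := by
        obtain ⟨a, haU, p, hpS, hpa⟩ := mem_closure_iff.mp hx.mem U hU hxU
        exact ⟨p, hpS, by simp [hpa, haU]⟩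
      have h2 : (S ∩ ((Set.univ : Set A) ×ˢ V)).Nonempty := by
        obtain ⟨b, hbV, p, hpS, hpb⟩ := mem_closure_iff.mp hy.mem V hV hyV
        exact ⟨p, hpS, by simp [hpb, hbV]⟩
      obtain ⟨q, hqS, hq1, hq2⟩ := hS.2 (U ×ˢ (Set.univ : Set B)) ((Set.univ : Set A) ×ˢ V)
        (hU.prod isOpen_univ) (isOpen_univ.prod hV) h1 h2
      exact hUV ⟨hq1.1, hq2.2⟩ hqS
    refine ⟨(x, y), ?_⟩
    have hcl : closure {((x, y) : A × B)} =
        closure (Prod.fst '' S) ×ˢ closure (Prod.snd '' S) := by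
      rw [← Set.singleton_prod_singleton, closure_prod_eq, hx, hy]
    refine subset_antisymm ?_ ?_
    · exact (IsClosed.closure_subset_iff hS').mpr (Set.singleton_subset_iff.mpr hxy)
    · intro p hp
      rw [hcl]
      exact ⟨subset_closure ⟨p, hp, rfl⟩, subset_closure ⟨p, hp, rfl⟩⟩

/-- Two continuous maps into a space agreeing on a b-dense set specialize pointwise. -/
lemma bdense_specializes {Y Z : Type*} [TopologicalSpace Y] [TopologicalSpace Z] {A : Set Y}
    (hd : ∀ z : Set Y, IsClosed z → z ⊆ closure (A ∩ z)) (g h : C(Y, Z))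
    (hA : ∀ a ∈ A, g a = h a) (y : Y) : g y ∈ closure {h y} := by
  have h1 : A ∩ closure {y} ⊆ g ⁻¹' closure {h y} := by
    rintro a ⟨haA, hay⟩
    have : h y ⤳ h a := (specializes_iff_mem_closure.mpr hay).map h.continuous
    rw [Set.mem_preimage, hA a haA]
    exact this.mem_closure
  have h2 : y ∈ closure (A ∩ closure {y}) :=
    hd (closure {y}) isClosed_closure (subset_closure rfl)
  exact closure_minimal h1 (isClosed_closure.preimage g.continuous) h2

/-- Open sets in the Sierpiński space `Prop` are upward closed. -/
lemma prop_isOpen_upper {U : Set Prop} (hU : IsOpen U) :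
    ∀ p q : Prop, p ∈ U → (p → q) → q ∈ U := by
  have hU' : TopologicalSpace.GenerateOpen {{True}} U := hU
  clear hU
  induction hU' with
  | basic s hs =>
    intro p q hp hpq
    simp only [Set.mem_singleton_iff] at hs
    subst hs
    simp only [Set.mem_singleton_iff] at hp ⊢
    exact eq_true (hpq (of_eq_true hp))
  | univ => intro p q _ _; trivial
  | inter s t _ _ ihs iht =>
    intro p q hp hpq
    exact ⟨ihs p q hp.1 hpq, iht p q hp.2 hpq⟩
  | sUnion S _ ih =>
    intro p q hp hpq
    obtain ⟨s, hsS, hps⟩ := hp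
    exact ⟨s, hsS, ih s hsS p q hps hpq⟩

lemma prop_mem_closure {p q : Prop} (hpq : p → q) : p ∈ closure ({q} : Set Prop) := by
  rw [mem_closure_iff]
  intro U hU hpU
  exact ⟨q, prop_isOpen_upper hU p q hpU hpq, rfl⟩

instance : QuasiSober Prop where
  sober {S} hS hS' := by
    by_cases hT : True ∈ S
    · refine ⟨True, subset_antisymm
        (hS'.closure_subset_iff.mpr (Set.singleton_subset_iff.mpr hT)) ?_⟩
      exact fun p _ => prop_mem_closure (fun _ => trivial)
    · obtain ⟨q, hq⟩ := hS.1
      have hFS : False ∈ S :=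
        hS'.closure_subset_iff.mpr (Set.singleton_subset_iff.mpr hq) (prop_mem_closure False.elim)
      refine ⟨False, subset_antisymm
        (hS'.closure_subset_iff.mpr (Set.singleton_subset_iff.mpr hFS)) ?_⟩
      intro p hp
      have hnp : ¬p := fun h => hT ((eq_true h) ▸ hp)
      exact prop_mem_closure hnp

/-- The category of sober topological spaces: the full subcategory of `TopCat`
on the `T0` quasi-sober spaces. -/
abbrev SoberCat : Type _ :=
  CategoryTheory.ObjectProperty.FullSubcategory fun Z : TopCat => T0Space Z ∧ QuasiSober Z

/-- A continuous map of sober spaces is an epimorphism in the category of sober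
spaces if and only if `range f ∩ z` is dense in `z` for every closed `z ⊆ Y`. -/
theorem stmt_8 {X Y : Type u} [TopologicalSpace X] [TopologicalSpace Y]
    [T0Space X] [QuasiSober X] [T0Space Y] [QuasiSober Y]
    (f : C(X, Y)) :
    Epi (show (⟨TopCat.of X, ‹T0Space X›, ‹QuasiSober X›⟩ : SoberCat) ⟶
          ⟨TopCat.of Y, ‹T0Space Y›, ‹QuasiSober Y›⟩ from ObjectProperty.homMk (TopCat.ofHom f)) ↔
      ∀ z : Set Y, IsClosed z → z ⊆ closure (Set.range f ∩ z) := by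
  constructor
  · intro hepi z hz y₀ hy₀
    by_contra hyc
    set A := Set.range f with hA
    set C := closure ({y₀} : Set Y) with hC
    have hCz : C ⊆ z := closure_minimal (Set.singleton_subset_iff.mpr hy₀) hz
    have hyc' : y₀ ∉ closure (A ∩ C) := fun hmem =>
      hyc (closure_mono (Set.inter_subset_inter_right A hCz) hmem)
    set V := (closure (A ∩ C))ᶜ with hV
    have hVopen : IsOpen V := isClosed_closure.isOpen_compl
    have hy₀V : y₀ ∈ V := hyc'
    have hy₀C : y₀ ∈ C := subset_closure rfl
    let Zobj : SoberCat := ⟨TopCat.of (Y × Prop),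
      (inferInstance : T0Space (Y × Prop)), (inferInstance : QuasiSober (Y × Prop))⟩
    let g : C(Y, Y × Prop) :=
      ⟨fun y => (y, y ∈ Cᶜ), continuous_id.prodMk (continuous_Prop.mpr
        (show IsOpen Cᶜ from isClosed_closure.isOpen_compl))⟩
    let h : C(Y, Y × Prop) :=
      ⟨fun y => (y, y ∈ V ∪ Cᶜ), continuous_id.prodMk (continuous_Prop.mpr
        (show IsOpen (V ∪ Cᶜ) from hVopen.union isClosed_closure.isOpen_compl))⟩
    have hw : (show (⟨TopCat.of X, ‹T0Space X›, ‹QuasiSober X›⟩ : SoberCat) ⟶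
          ⟨TopCat.of Y, ‹T0Space Y›, ‹QuasiSober Y›⟩ from ObjectProperty.homMk (TopCat.ofHom f)) ≫
        (show (⟨TopCat.of Y, ‹T0Space Y›, ‹QuasiSober Y›⟩ : SoberCat) ⟶ Zobj from ObjectProperty.homMk (TopCat.ofHom g)) =
        (show (⟨TopCat.of X, ‹T0Space X›, ‹QuasiSober X›⟩ : SoberCat) ⟶
          ⟨TopCat.of Y, ‹T0Space Y›, ‹QuasiSober Y›⟩ from ObjectProperty.homMk (TopCat.ofHom f)) ≫
        (show (⟨TopCat.of Y, ‹T0Space Y›, ‹QuasiSober Y›⟩ : SoberCat) ⟶ Zobj from ObjectProperty.homMk (TopCat.ofHom h)) := by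
      apply ObjectProperty.hom_ext
      apply TopCat.hom_ext
      apply ContinuousMap.ext
      intro x
      have hgh : g (f x) = h (f x) := by
        have : (f x ∈ Cᶜ) = (f x ∈ V ∪ Cᶜ) := by
          apply propext
          constructor
          · exact Or.inr
          · rintro (hfV | hfC)
            · intro hfC'
              exact hfV (subset_closure ⟨⟨x, rfl⟩, hfC'⟩)
            · exact hfC
        exact Prod.ext rfl this
      exact hgh
    have heq := (cancel_epi (show (⟨TopCat.of X, ‹T0Space X›, ‹QuasiSober X›⟩ : SoberCat) ⟶
          ⟨TopCat.of Y, ‹T0Space Y›, ‹QuasiSober Y›⟩ from ObjectProperty.homMk (TopCat.ofHom f))).mp hw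
    have heval : g y₀ = h y₀ := ContinuousMap.congr_fun (congrArg (fun k => k.hom.hom) heq) y₀
    have hsnd : (y₀ ∈ Cᶜ) = (y₀ ∈ V ∪ Cᶜ) := congrArg Prod.snd heval
    have : y₀ ∈ Cᶜ := hsnd ▸ (Or.inl hy₀V : y₀ ∈ V ∪ Cᶜ)
    exact this hy₀C
  · intro hd
    constructor
    intro W g h hgh
    haveI : T0Space W.obj := W.property.1
    let g' : C(Y, W.obj) := g.hom.hom
    let h' : C(Y, W.obj) := h.hom.hom
    have hgh' : g'.comp f = h'.comp f := congrArg (fun k => k.hom.hom) hgh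
    have hA : ∀ a ∈ Set.range f, g' a = h' a := by
      rintro a ⟨x, rfl⟩
      exact ContinuousMap.congr_fun hgh' x
    apply ObjectProperty.hom_ext
    apply TopCat.hom_ext
    show g' = h'
    apply ContinuousMap.ext
    intro y
    exact Inseparable.eq (Specializes.antisymm
      (specializes_iff_mem_closure.mpr (bdense_specializes hd h' g' (fun a ha => (hA a ha).symm) y))
      (specializes_iff_mem_closure.mpr (bdense_specializes hd g' h' hA y)))
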